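/- Let N ≥ 1 and let V₁,…,V_d : ℝ^e → ℝ^e be bounded vector fields with N bounded derivatives. Then there exists a constant C, depending only on N and the norms of the vector fields, such that for every L ≥ 0, every family g = (g^{k,i₁,…,i_k})_{1 ≤ k ≤ N} of real numbers satisfying |g^{k,i₁,…,i_k}| ≤ L^k for all k and all indices, and all y, ỹ ∈ ℝ^e: |I[y, N, g] − I[ỹ, N, g]| ≤ C |y − ỹ| (L + L^N). -/

import Mathlib

open MeasureTheory Set

/-- Iterated application `V_{i₁}⋯V_{i_k} f` of vector fields as first-order differential
operators, `(V f)(y) = Df(y)·V(y)`. -/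
noncomputable def vfOp {E F : Type*} [NormedAddCommGroup E] [NormedSpace ℝ E]
    [NormedAddCommGroup F] [NormedSpace ℝ F] {d : ℕ}
    (V : Fin d → E → E) : List (Fin d) → (E → F) → E → F
  | [], f, y => f y
  | i :: w, f, y => fderiv ℝ (vfOp V w f) y (V i y)

/-- The step-`N` Euler scheme increment
`I[y,N,g] = Σ_{k=1}^N Σ_{i₁,…,i_k} V_{i₁}⋯V_{i_k}H(y) · g^{k,i₁,…,i_k}`. -/
noncomputable def euler {d e : ℕ}
    (V : Fin d → EuclideanSpace ℝ (Fin e) → EuclideanSpace ℝ (Fin e)) (N : ℕ)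
    (g : List (Fin d) → ℝ) (y : EuclideanSpace ℝ (Fin e)) : EuclideanSpace ℝ (Fin e) :=
  ∑ k ∈ Finset.Icc 1 N, ∑ w : Fin k → Fin d, g (List.ofFn w) • vfOp V (List.ofFn w) id y

lemma key {d e N : ℕ}
    (V : Fin d → EuclideanSpace ℝ (Fin e) → EuclideanSpace ℝ (Fin e)) (B : ℝ)
    (hV : ∀ i, ContDiff ℝ (N : ℕ∞) (V i))
    (hVb : ∀ i, ∀ k ≤ N, ∀ y, ‖iteratedFDeriv ℝ k (V i) y‖ ≤ B)
    (w : List (Fin d)) : w.length ≤ N →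
    ContDiff ℝ ((N + 1 - w.length : ℕ) : ℕ∞)
      (vfOp V w (id : EuclideanSpace ℝ (Fin e) → EuclideanSpace ℝ (Fin e))) ∧
    ∀ j : ℕ, 1 ≤ j → j ≤ N + 1 - w.length → ∀ y,
      ‖iteratedFDeriv ℝ j
        (vfOp V w (id : EuclideanSpace ℝ (Fin e) → EuclideanSpace ℝ (Fin e))) y‖ ≤
        (2 ^ N * max B 1) ^ w.length := by
  set c : ℝ := 2 ^ N * max B 1 with hc
  have hc1 : (1 : ℝ) ≤ c := by
    calc (1:ℝ) = 1 * 1 := by ring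
    _ ≤ 2 ^ N * max B 1 := by
        apply mul_le_mul (one_le_pow₀ (by norm_num)) (le_max_right _ _) (by norm_num)
        positivity
  have hc0 : (0 : ℝ) ≤ c := le_trans zero_le_one hc1
  induction w with
  | nil =>
    intro _
    have hid : vfOp V ([] : List (Fin d)) (id : EuclideanSpace ℝ (Fin e) → _) = id := rfl
    rw [hid]
    refine ⟨contDiff_id, fun j hj1 hj2 y => ?_⟩
    have hfd : (fderiv ℝ (id : EuclideanSpace ℝ (Fin e) → EuclideanSpace ℝ (Fin e))) =
        fun _ => ContinuousLinearMap.id ℝ (EuclideanSpace ℝ (Fin e)) :=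
      funext fun x => fderiv_id
    rcases Nat.lt_or_ge j 2 with h2 | h2
    · interval_cases j
      have : ‖iteratedFDeriv ℝ 0 (fderiv ℝ
          (id : EuclideanSpace ℝ (Fin e) → EuclideanSpace ℝ (Fin e))) y‖ =
          ‖iteratedFDeriv ℝ 1 (id : EuclideanSpace ℝ (Fin e) → EuclideanSpace ℝ (Fin e)) y‖ :=
        norm_iteratedFDeriv_fderiv
      rw [← this, norm_iteratedFDeriv_zero, hfd]
      simp only [List.length_nil, pow_zero]
      exact ContinuousLinearMap.norm_id_le
    · obtain ⟨m, rfl⟩ : ∃ m, j = m + 1 := ⟨j - 1, by omega⟩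
      have : ‖iteratedFDeriv ℝ m (fderiv ℝ
          (id : EuclideanSpace ℝ (Fin e) → EuclideanSpace ℝ (Fin e))) y‖ =
          ‖iteratedFDeriv ℝ (m+1) (id : EuclideanSpace ℝ (Fin e) → _) y‖ :=
        norm_iteratedFDeriv_fderiv
      rw [← this, hfd, iteratedFDeriv_const_of_ne (by omega)]
      simp
  | cons i t IH =>
    intro hw
    have hkN : t.length ≤ N := by simpa using Nat.le_of_succ_le hw
    obtain ⟨hCt, hBt⟩ := IH hkN
    set k := t.length with hk
    have hsub1 : N + 1 - k = (N - k) + 1 := by omega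
    have hsub2 : N + 1 - (i :: t).length = N - k := by simp only [List.length_cons]; omega
    -- smoothness of the derivative
    have hfd : ContDiff ℝ ((N - k : ℕ) : ℕ∞) (fderiv ℝ (vfOp V t id)) := by
      apply hCt.fderiv_right
      rw [hsub1]
      exact_mod_cast le_refl _
    have hVi : ContDiff ℝ ((N - k : ℕ) : ℕ∞) (V i) :=
      (hV i).of_le (by exact_mod_cast Nat.sub_le N k)
    have hg : ContDiff ℝ ((N - k : ℕ) : ℕ∞)
        (fun y => fderiv ℝ (vfOp V t id) y (V i y)) := hfd.clm_apply hVi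
    have heq : vfOp V (i :: t) (id : EuclideanSpace ℝ (Fin e) → _) =
        fun y => fderiv ℝ (vfOp V t id) y (V i y) := rfl
    constructor
    · rw [heq, hsub2]; exact hg
    · intro j hj1 hj2 y
      rw [hsub2] at hj2
      rw [heq]
      have hstep := norm_iteratedFDeriv_clm_apply hfd hVi y (by exact_mod_cast hj2)
      refine le_trans hstep ?_
      have hterm : ∀ m ∈ Finset.range (j + 1),
          (j.choose m : ℝ) * ‖iteratedFDeriv ℝ m (fderiv ℝ (vfOp V t id)) y‖ *
            ‖iteratedFDeriv ℝ (j - m) (V i) y‖ ≤ (j.choose m : ℝ) * (c ^ k * max B 1) := by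
        intro m hm
        rw [Finset.mem_range] at hm
        have h1 : ‖iteratedFDeriv ℝ m (fderiv ℝ (vfOp V t id)) y‖ ≤ c ^ k := by
          rw [norm_iteratedFDeriv_fderiv]
          exact hBt (m + 1) (by omega) (by omega) y
        have h2 : ‖iteratedFDeriv ℝ (j - m) (V i) y‖ ≤ max B 1 :=
          le_trans (hVb i (j - m) (by omega) y) (le_max_left _ _)
        calc (j.choose m : ℝ) * ‖iteratedFDeriv ℝ m (fderiv ℝ (vfOp V t id)) y‖ *
              ‖iteratedFDeriv ℝ (j - m) (V i) y‖
            ≤ (j.choose m : ℝ) * (c ^ k) * (max B 1) := by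
              apply mul_le_mul (mul_le_mul le_rfl h1 (norm_nonneg _) (by positivity)) h2
                (norm_nonneg _) (by positivity)
          _ = (j.choose m : ℝ) * (c ^ k * max B 1) := by ring
      refine le_trans (Finset.sum_le_sum hterm) ?_
      rw [← Finset.sum_mul, ← Nat.cast_sum, Nat.sum_range_choose]
      have hlen : (i :: t).length = k + 1 := by simp [hk]
      rw [hlen, pow_succ]
      calc ((2 ^ j : ℕ) : ℝ) * (c ^ k * max B 1) ≤ (2 ^ N : ℝ) * (c ^ k * max B 1) := by
            apply mul_le_mul_of_nonneg_right _ (by positivity)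
            exact_mod_cast Nat.pow_le_pow_right (by norm_num) (by omega)
        _ = c ^ k * c := by rw [hc]; ring

lemma vfOp_lip {d e N : ℕ}
    (V : Fin d → EuclideanSpace ℝ (Fin e) → EuclideanSpace ℝ (Fin e)) (B : ℝ)
    (hV : ∀ i, ContDiff ℝ (N : ℕ∞) (V i))
    (hVb : ∀ i, ∀ k ≤ N, ∀ y, ‖iteratedFDeriv ℝ k (V i) y‖ ≤ B)
    (w : List (Fin d)) (hw : w.length ≤ N) (y z : EuclideanSpace ℝ (Fin e)) :
    ‖vfOp V w (id : EuclideanSpace ℝ (Fin e) → _) y - vfOp V w id z‖ ≤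
      (2 ^ N * max B 1) ^ w.length * ‖y - z‖ := by
  obtain ⟨hC, hB⟩ := key V B hV hVb w hw
  have hdiff : ∀ x ∈ (Set.univ : Set (EuclideanSpace ℝ (Fin e))),
      DifferentiableAt ℝ (vfOp V w (id : EuclideanSpace ℝ (Fin e) → _)) x := by
    intro x _
    exact (hC.differentiable (by exact_mod_cast (by omega : N + 1 - w.length ≠ 0))) x
  have hbound : ∀ x ∈ (Set.univ : Set (EuclideanSpace ℝ (Fin e))),
      ‖fderiv ℝ (vfOp V w (id : EuclideanSpace ℝ (Fin e) → _)) x‖ ≤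
        (2 ^ N * max B 1) ^ w.length := by
    intro x _
    have h1 := hB 1 le_rfl (by omega) x
    have e1 : ‖iteratedFDeriv ℝ 1 (vfOp V w (id : EuclideanSpace ℝ (Fin e) → _)) x‖ =
        ‖fderiv ℝ (vfOp V w (id : EuclideanSpace ℝ (Fin e) → _)) x‖ := by
      rw [show (1:ℕ) = 0 + 1 from rfl, ← norm_iteratedFDeriv_fderiv, norm_iteratedFDeriv_zero]
    rwa [e1] at h1
  exact convex_univ.norm_image_sub_le_of_norm_fderiv_le hdiff hbound
    (Set.mem_univ z) (Set.mem_univ y)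

/-- (Lipschitz dependence of the Euler scheme on the initial point.)
For `Lip^N` vector fields there is a constant `C`, depending only on `N` and the vector
fields, such that whenever the coefficients `g` satisfy the homogeneous bound
`|g^{k,i₁,…,i_k}| ≤ L^k`, one has
`‖I[y,N,g] − I[z,N,g]‖ ≤ C ‖y − z‖ (L + L^N)`. -/
theorem statement7 {d e N : ℕ} (hN : 1 ≤ N)
    (V : Fin d → EuclideanSpace ℝ (Fin e) → EuclideanSpace ℝ (Fin e)) (B : ℝ)
    (hV : ∀ i, ContDiff ℝ (N : ℕ∞) (V i))
    (hVb : ∀ i, ∀ k ≤ N, ∀ y, ‖iteratedFDeriv ℝ k (V i) y‖ ≤ B) :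
    ∃ C : ℝ, ∀ L : ℝ, 0 ≤ L → ∀ g : List (Fin d) → ℝ,
      (∀ w : List (Fin d), 1 ≤ w.length → w.length ≤ N → |g w| ≤ L ^ w.length) →
      ∀ y z : EuclideanSpace ℝ (Fin e),
        ‖euler V N g y - euler V N g z‖ ≤ C * ‖y - z‖ * (L + L ^ N) := by
  set c : ℝ := 2 ^ N * max B 1 with hcdef
  have hc0 : (0 : ℝ) ≤ c := by positivity
  refine ⟨∑ k ∈ Finset.Icc 1 N, (d : ℝ) ^ k * c ^ k, ?_⟩
  intro L hL g hg y z
  have hLk : ∀ k, 1 ≤ k → k ≤ N → L ^ k ≤ L + L ^ N := by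
    intro k h1 h2
    rcases le_total L 1 with h | h
    · calc L ^ k ≤ L ^ 1 := pow_le_pow_of_le_one hL h h1
      _ = L := pow_one L
      _ ≤ L + L ^ N := le_add_of_nonneg_right (pow_nonneg hL N)
    · calc L ^ k ≤ L ^ N := pow_le_pow_right₀ h h2
      _ ≤ L + L ^ N := le_add_of_nonneg_left hL
  have h1 : euler V N g y - euler V N g z = ∑ k ∈ Finset.Icc 1 N,
      ∑ w : Fin k → Fin d, g (List.ofFn w) •
        (vfOp V (List.ofFn w) (id : EuclideanSpace ℝ (Fin e) → _) y -
          vfOp V (List.ofFn w) id z) := by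
    simp [euler, Finset.sum_sub_distrib, smul_sub]
  rw [h1]
  have hinner : ∀ k ∈ Finset.Icc 1 N,
      ‖∑ w : Fin k → Fin d, g (List.ofFn w) •
        (vfOp V (List.ofFn w) (id : EuclideanSpace ℝ (Fin e) → _) y -
          vfOp V (List.ofFn w) id z)‖ ≤
      (d : ℝ) ^ k * c ^ k * (‖y - z‖ * (L + L ^ N)) := by
    intro k hk
    rw [Finset.mem_Icc] at hk
    refine le_trans (norm_sum_le _ _) ?_
    have hterm : ∀ w : Fin k → Fin d,
        ‖g (List.ofFn w) • (vfOp V (List.ofFn w) (id : EuclideanSpace ℝ (Fin e) → _) y -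
          vfOp V (List.ofFn w) id z)‖ ≤ L ^ k * (c ^ k * ‖y - z‖) := by
      intro w
      rw [norm_smul, Real.norm_eq_abs]
      have hlen : (List.ofFn w).length = k := List.length_ofFn
      have hg' : |g (List.ofFn w)| ≤ L ^ k := by
        have := hg (List.ofFn w) (by omega) (by omega)
        rwa [hlen] at this
      have hlip := vfOp_lip V B hV hVb (List.ofFn w) (by omega) y z
      rw [hlen] at hlip
      exact mul_le_mul hg' hlip (norm_nonneg _) (pow_nonneg hL k)
    refine le_trans (Finset.sum_le_sum fun w _ => hterm w) ?_
    rw [Finset.sum_const, Finset.card_univ, Fintype.card_fun, Fintype.card_fin,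
      Fintype.card_fin, nsmul_eq_mul]
    push_cast
    calc (d : ℝ) ^ k * (L ^ k * (c ^ k * ‖y - z‖))
        = (d : ℝ) ^ k * c ^ k * ‖y - z‖ * L ^ k := by ring
      _ ≤ (d : ℝ) ^ k * c ^ k * ‖y - z‖ * (L + L ^ N) := by
          apply mul_le_mul_of_nonneg_left (hLk k hk.1 hk.2) (by positivity)
      _ = (d : ℝ) ^ k * c ^ k * (‖y - z‖ * (L + L ^ N)) := by ring
  refine le_trans (norm_sum_le _ _) (le_trans (Finset.sum_le_sum hinner) ?_)
  rw [← Finset.sum_mul]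
  apply le_of_eq
  ring
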